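/- arXiv:1502.03393 — 3 statements merged into one kernel-verified Lean document; each statement's English description precedes it below -/
import Mathlib

section
/- Convergence of gradient Luxemburg norms for smooth functions (Lemma 2.4): Let p and p_h (h ∈ ℕ) all belong to the class 𝒞 and suppose p_h(x) → p(x) as h → ∞ for every x ∈ Ω. Then for every function w : ℝ^N → ℝ of class C^1 whose support is compact and contained in Ω, one has lim_{h→∞} ‖∇w‖_{p_h(x)} = ‖∇w‖_{p(x)}, where ∇w denotes the gradient of w and the Luxemburg norms are taken over Ω with the Euclidean norm of ∇w(x). -/
open MeasureTheory Filter Topology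
open scoped ENNReal

/-- The `p(x)`-modular `ρ_{p(x)}(u) = ∫_Ω |u(x)|^{p(x)} dx`, valued in `ℝ≥0∞`. -/
noncomputable def pModular {N : ℕ} (Ω : Set (EuclideanSpace ℝ (Fin N)))
    (p u : EuclideanSpace ℝ (Fin N) → ℝ) : ENNReal :=
  ∫⁻ x in Ω, ENNReal.ofReal (|u x| ^ p x)

section Aux

variable {N : ℕ} {Ω : Set (EuclideanSpace ℝ (Fin N))}

/-- Monotonicity of the modular in `γ`. -/
lemma pModular_div_mono (hΩ : MeasurableSet Ω) {q g : EuclideanSpace ℝ (Fin N) → ℝ}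
    (hq0 : ∀ x ∈ Ω, 0 ≤ q x) (hg : ∀ x, 0 ≤ g x) {γ' γ : ℝ} (h0 : 0 < γ') (h : γ' ≤ γ) :
    pModular Ω q (fun x => g x / γ) ≤ pModular Ω q (fun x => g x / γ') := by
  refine lintegral_mono_ae ((ae_restrict_iff' hΩ).2 (Filter.Eventually.of_forall fun x hx => ?_))
  refine ENNReal.ofReal_le_ofReal (Real.rpow_le_rpow (abs_nonneg _) ?_ (hq0 x hx))
  rw [abs_of_nonneg (div_nonneg (hg x) (h0.le.trans h)), abs_of_nonneg (div_nonneg (hg x) h0.le)]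
  gcongr
  exact hg x

/-- Scaling: dividing by `a*γ` with `a > 1` shrinks the modular by `1/a`. -/
lemma pModular_div_scale (hΩ : MeasurableSet Ω) {q g : EuclideanSpace ℝ (Fin N) → ℝ}
    (hq1 : ∀ x ∈ Ω, 1 ≤ q x) (hg : ∀ x, 0 ≤ g x) {γ a : ℝ} (hγ : 0 < γ) (ha : 1 < a) :
    pModular Ω q (fun x => g x / (a * γ)) ≤
      ENNReal.ofReal (1 / a) * pModular Ω q (fun x => g x / γ) := by
  have ha0 : 0 < a := lt_trans one_pos ha
  have key : ∀ x ∈ Ω, ENNReal.ofReal (|g x / (a * γ)| ^ q x) ≤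
      ENNReal.ofReal (1 / a) * ENNReal.ofReal (|g x / γ| ^ q x) := by
    intro x hx
    have hbase : |g x / (a * γ)| = |g x / γ| * (1 / a) := by
      rw [abs_of_nonneg (div_nonneg (hg x) (by positivity)),
        abs_of_nonneg (div_nonneg (hg x) hγ.le), mul_comm a γ, ← div_div,
        div_eq_mul_one_div]
    have h1a : (1 / a) ^ q x ≤ 1 / a := by
      calc (1 / a) ^ q x ≤ (1 / a) ^ (1 : ℝ) := by
            refine Real.rpow_le_rpow_of_exponent_ge (by positivity) ?_ (hq1 x hx)
            rw [div_le_one ha0]; exact ha.le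
        _ = 1 / a := Real.rpow_one _
    have hr : |g x / (a * γ)| ^ q x ≤ (1 / a) * (|g x / γ| ^ q x) := by
      rw [hbase, Real.mul_rpow (abs_nonneg _) (by positivity), mul_comm]
      exact mul_le_mul_of_nonneg_right h1a (Real.rpow_nonneg (abs_nonneg _) _)
    calc ENNReal.ofReal (|g x / (a * γ)| ^ q x) ≤ ENNReal.ofReal ((1 / a) * (|g x / γ| ^ q x)) :=
          ENNReal.ofReal_le_ofReal hr
      _ = ENNReal.ofReal (1 / a) * ENNReal.ofReal (|g x / γ| ^ q x) :=
          ENNReal.ofReal_mul (by positivity)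
  calc pModular Ω q (fun x => g x / (a * γ))
      ≤ ∫⁻ x in Ω, ENNReal.ofReal (1 / a) * ENNReal.ofReal (|g x / γ| ^ q x) := by
        refine lintegral_mono_ae ((ae_restrict_iff' hΩ).2 (Filter.Eventually.of_forall key))
    _ = ENNReal.ofReal (1 / a) * pModular Ω q (fun x => g x / γ) :=
        lintegral_const_mul' _ _ ENNReal.ofReal_ne_top

/-- Dominated convergence for the modular as the exponent converges pointwise. -/
lemma pModular_tendsto (hΩ : MeasurableSet Ω) (hΩfin : volume Ω ≠ ∞)
    {g : EuclideanSpace ℝ (Fin N) → ℝ} (hgc : Continuous g)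
    {M : ℝ} (hgM : ∀ x, |g x| ≤ M)
    {qh : ℕ → EuclideanSpace ℝ (Fin N) → ℝ} {q : EuclideanSpace ℝ (Fin N) → ℝ}
    (hqhc : ∀ h, ContinuousOn (qh h) Ω)
    {B : ℝ} (hqh1 : ∀ h, ∀ x ∈ Ω, 1 ≤ qh h x) (hqhB : ∀ h, ∀ x ∈ Ω, qh h x ≤ B)
    (hqpos : ∀ x ∈ Ω, 0 < q x)
    (hconv : ∀ x ∈ Ω, Tendsto (fun h => qh h x) atTop (𝓝 (q x)))
    {γ : ℝ} (hγ : 0 < γ) :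
    Tendsto (fun h => pModular Ω (qh h) (fun x => g x / γ)) atTop
      (𝓝 (pModular Ω q (fun x => g x / γ))) := by
  have hM0 : 0 ≤ M := le_trans (abs_nonneg _) (hgM 0)
  set C : ℝ≥0∞ := ENNReal.ofReal (max 1 ((M / γ) ^ B)) with hC
  refine tendsto_lintegral_of_dominated_convergence' (fun _ => C) ?_ ?_ ?_ ?_
  · intro n
    have h1 : AEMeasurable (qh n) (volume.restrict Ω) := (hqhc n).aemeasurable hΩ
    have h2 : AEMeasurable (fun x => |g x / γ|) (volume.restrict Ω) :=
      ((hgc.div_const γ).abs).aemeasurable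
    exact (h2.pow h1).ennreal_ofReal
  · intro n
    refine (ae_restrict_iff' hΩ).2 (Filter.Eventually.of_forall fun x hx => ?_)
    refine ENNReal.ofReal_le_ofReal ?_
    have ht0 : 0 ≤ |g x / γ| := abs_nonneg _
    have htM : |g x / γ| ≤ M / γ := by
      rw [abs_div, abs_of_pos hγ]
      gcongr
      exact hgM x
    rcases le_or_gt (|g x / γ|) 1 with hle | hlt
    · exact le_max_of_le_left (Real.rpow_le_one ht0 hle (le_trans zero_le_one (hqh1 n x hx)))
    · refine le_max_of_le_right ?_
      calc |g x / γ| ^ qh n x ≤ |g x / γ| ^ B :=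
            Real.rpow_le_rpow_of_exponent_le hlt.le (hqhB n x hx)
        _ ≤ (M / γ) ^ B := Real.rpow_le_rpow ht0 htM
            (le_trans (le_trans zero_le_one (hqh1 n x hx)) (hqhB n x hx))
  · simp only [lintegral_const, Measure.restrict_apply MeasurableSet.univ, Set.univ_inter]
    exact ENNReal.mul_ne_top ENNReal.ofReal_ne_top hΩfin
  · refine (ae_restrict_iff' hΩ).2 (Filter.Eventually.of_forall fun x hx => ?_)
    have : Tendsto (fun n => |g x / γ| ^ qh n x) atTop (𝓝 (|g x / γ| ^ q x)) :=
      Filter.Tendsto.rpow tendsto_const_nhds (hconv x hx) (Or.inr (hqpos x hx))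
    exact (ENNReal.continuous_ofReal.continuousAt.tendsto.comp this)

end Aux

section Aux2

variable {N : ℕ} {Ω : Set (EuclideanSpace ℝ (Fin N))}

/-- For γ large enough (depending only on the bound of g and the measure of Ω),
the modular is at most 1. -/
lemma pModular_le_one_big (hΩ : MeasurableSet Ω) (hΩfin : volume Ω ≠ ∞)
    {q g : EuclideanSpace ℝ (Fin N) → ℝ} (hq1 : ∀ x ∈ Ω, 1 ≤ q x)
    {M : ℝ} (hgM : ∀ x, |g x| ≤ M) :
    pModular Ω q (fun x => g x / ((M + 1) * ((volume Ω).toReal + 1))) ≤ 1 := by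
  have hM0 : 0 ≤ M := le_trans (abs_nonneg _) (hgM 0)
  set T : ℝ := (volume Ω).toReal with hT
  have hT0 : 0 ≤ T := ENNReal.toReal_nonneg
  set γb : ℝ := (M + 1) * (T + 1) with hγb
  have hγb0 : 0 < γb := by positivity
  have key : ∀ x ∈ Ω, ENNReal.ofReal (|g x / γb| ^ q x) ≤ ENNReal.ofReal (1 / (T + 1)) := by
    intro x hx
    refine ENNReal.ofReal_le_ofReal ?_
    have ht : |g x / γb| ≤ 1 / (T + 1) := by
      rw [abs_div, abs_of_pos hγb0]
      calc |g x| / γb ≤ M / γb := by gcongr; exact hgM x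
        _ ≤ (M + 1) / γb := by gcongr; linarith
        _ = 1 / (T + 1) := by rw [hγb]; field_simp
    have ht1 : |g x / γb| ≤ 1 := le_trans ht (by rw [div_le_one (by linarith)]; linarith)
    rcases eq_or_lt_of_le (abs_nonneg (g x / γb)) with h0 | h0
    · rw [← h0, Real.zero_rpow (by linarith [hq1 x hx] : q x ≠ 0)]
      positivity
    · calc |g x / γb| ^ q x ≤ |g x / γb| ^ (1 : ℝ) :=
            Real.rpow_le_rpow_of_exponent_ge h0 ht1 (hq1 x hx)
        _ = |g x / γb| := Real.rpow_one _
        _ ≤ 1 / (T + 1) := ht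
  calc pModular Ω q (fun x => g x / γb)
      ≤ ∫⁻ _ in Ω, ENNReal.ofReal (1 / (T + 1)) :=
        lintegral_mono_ae ((ae_restrict_iff' hΩ).2 (Filter.Eventually.of_forall key))
    _ = ENNReal.ofReal (1 / (T + 1)) * volume Ω := by
        rw [lintegral_const, Measure.restrict_apply MeasurableSet.univ, Set.univ_inter]
    _ = ENNReal.ofReal (1 / (T + 1)) * ENNReal.ofReal T := by
        rw [ENNReal.ofReal_toReal hΩfin]
    _ = ENNReal.ofReal (T / (T + 1)) := by
        rw [← ENNReal.ofReal_mul (by positivity), one_div, inv_mul_eq_div]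
    _ ≤ 1 := ENNReal.ofReal_le_one.2 (by rw [div_le_one (by linarith)]; linarith)

end Aux2

/-- The Luxemburg norm `‖u‖_{p(x)} = inf {γ > 0 : ρ_{p(x)}(u/γ) ≤ 1}`. -/
noncomputable def luxNorm {N : ℕ} (Ω : Set (EuclideanSpace ℝ (Fin N)))
    (p u : EuclideanSpace ℝ (Fin N) → ℝ) : ℝ :=
  sInf {γ : ℝ | 0 < γ ∧ pModular Ω p (fun x => u x / γ) ≤ 1}

/-- The class `𝒞` of admissible exponents: `p` extends continuously to the
closure of `Ω`, satisfies `1 < inf_Ω p ≤ p(x) ≤ sup_Ω p < N`, and is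
log-Hölder continuous. -/
def InClassC {N : ℕ} (Ω : Set (EuclideanSpace ℝ (Fin N)))
    (p : EuclideanSpace ℝ (Fin N) → ℝ) : Prop :=
  ContinuousOn p (closure Ω) ∧
  (∃ pm pM : ℝ, 1 < pm ∧ pM < (N : ℝ) ∧ ∀ x ∈ Ω, pm ≤ p x ∧ p x ≤ pM) ∧
  (∃ L : ℝ, 0 < L ∧ ∀ x ∈ Ω, ∀ y ∈ Ω, 0 < dist x y → dist x y ≤ 1 / 2 →
    |p x - p y| ≤ -L / Real.log (dist x y))

/-- Convergence of gradient Luxemburg norms for `C¹` functions with compact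
support in `Ω`, under pointwise convergence of the exponents. -/
theorem gradient_luxNorm_convergence {N : ℕ} (hN : 2 ≤ N)
    (Ω : Set (EuclideanSpace ℝ (Fin N))) (hΩopen : IsOpen Ω)
    (hΩbdd : Bornology.IsBounded Ω)
    (p : EuclideanSpace ℝ (Fin N) → ℝ)
    (ph : ℕ → EuclideanSpace ℝ (Fin N) → ℝ)
    (hp : InClassC Ω p) (hph : ∀ h, InClassC Ω (ph h))
    (hconv : ∀ x ∈ Ω, Tendsto (fun h => ph h x) atTop (𝓝 (p x)))
    (w : EuclideanSpace ℝ (Fin N) → ℝ) (hw : ContDiff ℝ 1 w)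
    (hwsupp : HasCompactSupport w) (hwΩ : tsupport w ⊆ Ω) :
    Tendsto (fun h => luxNorm Ω (ph h) (fun x => ‖gradient w x‖)) atTop
      (𝓝 (luxNorm Ω p (fun x => ‖gradient w x‖))) := by
  have hΩmeas : MeasurableSet Ω := hΩopen.measurableSet
  have hΩfin : volume Ω ≠ ∞ := hΩbdd.measure_lt_top.ne
  set g : EuclideanSpace ℝ (Fin N) → ℝ := fun x => ‖gradient w x‖ with hgdef
  have hg0 : ∀ x, 0 ≤ g x := fun x => norm_nonneg _
  have hgradeq : gradient w = fun x =>
      (InnerProductSpace.toDual ℝ (EuclideanSpace ℝ (Fin N))).symm (fderiv ℝ w x) := rfl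
  have hgc : Continuous g := by
    have : Continuous (gradient w) := by
      rw [hgradeq]
      exact (LinearIsometryEquiv.continuous _).comp (hw.continuous_fderiv one_ne_zero)
    exact this.norm
  have hgsupp : HasCompactSupport g := by
    have h1 : HasCompactSupport (fderiv ℝ w) := hwsupp.fderiv (𝕜 := ℝ)
    have h2 : HasCompactSupport (gradient w) := by
      rw [hgradeq]
      exact h1.comp_left (map_zero _)
    exact h2.comp_left norm_zero
  obtain ⟨M, hgM⟩ : ∃ M, ∀ x, |g x| ≤ M := by
    obtain ⟨C, hC⟩ := hgsupp.exists_bound_of_continuous hgc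
    exact ⟨C, fun x => by simpa using hC x⟩
  -- facts about exponents in the class
  have hfacts : ∀ q : EuclideanSpace ℝ (Fin N) → ℝ, InClassC Ω q →
      ContinuousOn q Ω ∧ ∀ x ∈ Ω, 1 ≤ q x ∧ q x ≤ (N : ℝ) := by
    rintro q ⟨hc, ⟨pm, pM, hpm, hpM, hb⟩, -⟩
    exact ⟨hc.mono subset_closure, fun x hx =>
      ⟨le_trans hpm.le (hb x hx).1, le_trans (hb x hx).2 hpM.le⟩⟩
  have hp1 : ∀ x ∈ Ω, 1 ≤ p x := fun x hx => ((hfacts p hp).2 x hx).1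
  have hph1 : ∀ h, ∀ x ∈ Ω, 1 ≤ ph h x := fun h x hx => ((hfacts _ (hph h)).2 x hx).1
  have hphN : ∀ h, ∀ x ∈ Ω, ph h x ≤ (N : ℝ) := fun h x hx => ((hfacts _ (hph h)).2 x hx).2
  -- the admissible sets and basic facts
  set γb : ℝ := (M + 1) * ((volume Ω).toReal + 1) with hγbdef
  have hM0 : 0 ≤ M := le_trans (abs_nonneg _) (hgM 0)
  have hγb0 : 0 < γb := by positivity
  have hmemb : ∀ q : EuclideanSpace ℝ (Fin N) → ℝ, (∀ x ∈ Ω, 1 ≤ q x) →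
      γb ∈ {γ : ℝ | 0 < γ ∧ pModular Ω q (fun x => g x / γ) ≤ 1} :=
    fun q hq => ⟨hγb0, pModular_le_one_big hΩmeas hΩfin hq hgM⟩
  have hbdd : ∀ q : EuclideanSpace ℝ (Fin N) → ℝ,
      BddBelow {γ : ℝ | 0 < γ ∧ pModular Ω q (fun x => g x / γ) ≤ 1} :=
    fun q => ⟨0, fun γ hγ => hγ.1.le⟩
  -- modular convergence at each fixed γ
  have hmodconv : ∀ γ : ℝ, 0 < γ →
      Tendsto (fun h => pModular Ω (ph h) (fun x => g x / γ)) atTop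
        (𝓝 (pModular Ω p (fun x => g x / γ))) := by
    intro γ hγ
    exact pModular_tendsto hΩmeas hΩfin hgc hgM (fun h => (hfacts _ (hph h)).1)
      hph1 hphN (fun x hx => lt_of_lt_of_le one_pos (hp1 x hx)) hconv hγ
  by_cases hz : ∀ x, gradient w x = 0
  · -- trivial case : g = 0, both norms are 0
    have hgz : ∀ x, g x = 0 := fun x => by simp [hgdef, hz x]
    have h0 : ∀ q : EuclideanSpace ℝ (Fin N) → ℝ, (∀ x ∈ Ω, 1 ≤ q x) →
        luxNorm Ω q g = 0 := by
      intro q hq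
      have hseteq : {γ : ℝ | 0 < γ ∧ pModular Ω q (fun x => g x / γ) ≤ 1} = Set.Ioi 0 := by
        ext γ
        simp only [Set.mem_setOf_eq, Set.mem_Ioi]
        refine ⟨fun h => h.1, fun h => ⟨h, ?_⟩⟩
        have : pModular Ω q (fun x => g x / γ) = 0 := by
          unfold pModular
          rw [← lintegral_zero]
          refine setLIntegral_congr_fun hΩmeas (fun x hx => ?_)
          show ENNReal.ofReal (|g x / γ| ^ q x) = 0
          rw [hgz x, zero_div, abs_zero, Real.zero_rpow (by linarith [hq x hx] : q x ≠ 0),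
            ENNReal.ofReal_zero]
        rw [this]; exact zero_le_one
      unfold luxNorm
      rw [hseteq]
      exact csInf_Ioi
    have e1 : (fun h => luxNorm Ω (ph h) g) = fun _ => (0 : ℝ) :=
      funext fun h => h0 _ (hph1 h)
    rw [e1, h0 p hp1]
    exact tendsto_const_nhds
  · push_neg at hz
    obtain ⟨x0, hx0⟩ := hz
    have hgx0 : 0 < g x0 := by simpa [hgdef] using norm_pos_iff.2 hx0
    have hx0Ω : x0 ∈ Ω := by
      refine hwΩ (support_fderiv_subset ℝ ?_)
      simp only [Function.mem_support]
      intro hfd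
      exact hx0 (by rw [hgradeq]; simp [hfd])
    -- a set of positive measure where `g` is large
    set c0 : ℝ := g x0 / 2 with hc0def
    have hc00 : 0 < c0 := by positivity
    set U : Set (EuclideanSpace ℝ (Fin N)) := Ω ∩ g ⁻¹' Set.Ioi c0 with hUdef
    have hUopen : IsOpen U := hΩopen.inter (isOpen_Ioi.preimage hgc)
    have hUx0 : x0 ∈ U := ⟨hx0Ω, by simp only [Set.mem_preimage, Set.mem_Ioi, hc0def]; linarith⟩
    have hUpos : 0 < volume U := hUopen.measure_pos volume ⟨x0, hUx0⟩
    have hUfin : volume U ≠ ∞ :=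
      (lt_of_le_of_lt (measure_mono Set.inter_subset_left) hΩfin.lt_top).ne
    set u : ℝ := (volume U).toReal with hudef
    have hu0 : 0 < u := ENNReal.toReal_pos hUpos.ne' hUfin
    set c : ℝ := min c0 (c0 * u / 2) with hcdef
    have hc0' : 0 < c := lt_min hc00 (by positivity)
    -- the modular is > 1 for small γ (for exponent p)
    have hlow : ∀ γ : ℝ, 0 < γ → γ ≤ c → ¬ pModular Ω p (fun x => g x / γ) ≤ 1 := by
      intro γ hγ hγc hle
      have hbig : ∀ x ∈ U, ENNReal.ofReal (2 / u) ≤ ENNReal.ofReal (|g x / γ| ^ p x) := by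
        intro x hx
        have hgx : c0 < g x := hx.2
        have hbase1 : (1 : ℝ) ≤ g x / γ := by
          rw [le_div_iff₀ hγ, one_mul]
          calc γ ≤ c := hγc
            _ ≤ c0 := min_le_left _ _
            _ ≤ g x := hgx.le
        have hbase2 : 2 / u ≤ g x / γ := by
          have h1 : γ ≤ c0 * u / 2 := le_trans hγc (min_le_right _ _)
          rw [div_le_div_iff₀ hu0 hγ]
          calc 2 * γ ≤ 2 * (c0 * u / 2) := by linarith
            _ = c0 * u := by ring
            _ ≤ g x * u := by gcongr
        refine ENNReal.ofReal_le_ofReal ?_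
        have habs : |g x / γ| = g x / γ := abs_of_nonneg (div_nonneg (hg0 x) hγ.le)
        calc 2 / u ≤ g x / γ := hbase2
          _ = |g x / γ| ^ (1 : ℝ) := by rw [habs, Real.rpow_one]
          _ ≤ |g x / γ| ^ p x := by
              refine Real.rpow_le_rpow_of_exponent_le ?_ (hp1 x hx.1)
              rw [habs]; exact hbase1
      have hchain : (1 : ℝ≥0∞) < pModular Ω p (fun x => g x / γ) := by
        calc (1 : ℝ≥0∞) < ENNReal.ofReal 2 := by
              rw [← ENNReal.ofReal_one]; exact ENNReal.ofReal_lt_ofReal_iff two_pos |>.2 one_lt_two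
          _ = ENNReal.ofReal (2 / u) * ENNReal.ofReal u := by
              rw [← ENNReal.ofReal_mul (by positivity), div_mul_cancel₀]
              exact hu0.ne'
          _ = ENNReal.ofReal (2 / u) * volume U := by rw [ENNReal.ofReal_toReal hUfin]
          _ = ∫⁻ _ in U, ENNReal.ofReal (2 / u) := by
              rw [lintegral_const, Measure.restrict_apply MeasurableSet.univ, Set.univ_inter]
          _ ≤ ∫⁻ x in U, ENNReal.ofReal (|g x / γ| ^ p x) :=
              lintegral_mono_ae ((ae_restrict_iff' hUopen.measurableSet).2
                (Filter.Eventually.of_forall hbig))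
          _ ≤ pModular Ω p (fun x => g x / γ) := lintegral_mono_set Set.inter_subset_left
      exact absurd hle (not_le.2 hchain)
    -- positivity of the limit Luxemburg norm
    have hΛc : c ≤ luxNorm Ω p g := by
      refine le_csInf ⟨γb, hmemb p hp1⟩ fun γ hγ => ?_
      by_contra hcon
      push_neg at hcon
      exact hlow γ hγ.1 hcon.le hγ.2
    have hΛpos : 0 < luxNorm Ω p g := lt_of_lt_of_le hc0' hΛc
    have hb' : ∀ γ : ℝ, 0 < γ → γ < luxNorm Ω p g →
        ¬ pModular Ω p (fun x => g x / γ) ≤ 1 := by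
      intro γ h0 hΛ hle
      exact absurd (csInf_le (hbdd p) ⟨h0, hle⟩) (not_le.2 hΛ)
    have hSp_up : ∀ γ : ℝ, luxNorm Ω p g < γ → pModular Ω p (fun x => g x / γ) ≤ 1 := by
      intro γ hγ
      obtain ⟨γ', hγ'S, hlt⟩ := exists_lt_of_csInf_lt ⟨γb, hmemb p hp1⟩ hγ
      exact le_trans (pModular_div_mono hΩmeas
        (fun x hx => zero_le_one.trans (hp1 x hx)) hg0 hγ'S.1 hlt.le) hγ'S.2
    refine tendsto_order.2 ⟨fun a ha => ?_, fun a ha => ?_⟩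
    · -- lower bound
      set c' : ℝ := (max a 0 + luxNorm Ω p g) / 2 with hc'def
      have hma := le_max_left a 0
      have hm0 := le_max_right a 0
      have h1 : 0 < c' := by rw [hc'def]; linarith
      have h2 : c' < luxNorm Ω p g := by
        have : max a 0 < luxNorm Ω p g := max_lt ha hΛpos
        rw [hc'def]; linarith
      have h3 : a < c' := by rw [hc'def]; linarith
      have hm : 1 < pModular Ω p (fun x => g x / c') := not_le.1 (hb' c' h1 h2)
      filter_upwards [(hmodconv c' h1).eventually_const_lt hm] with h hh
      have hle : c' ≤ luxNorm Ω (ph h) g := by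
        refine le_csInf ⟨γb, hmemb _ (hph1 h)⟩ fun γ hγ => ?_
        by_contra hcon
        push_neg at hcon
        have hmono := pModular_div_mono hΩmeas
          (fun x hx => zero_le_one.trans (hph1 h x hx)) hg0 hγ.1 hcon.le
        exact absurd (hmono.trans hγ.2) (not_le.2 hh)
      linarith
    · -- upper bound
      set Λ : ℝ := luxNorm Ω p g with hΛdef
      set γ2 : ℝ := (Λ + a) / 2 with hγ2def
      set γ1 : ℝ := (Λ + γ2) / 2 with hγ1def
      have hγ2a : γ2 < a := by rw [hγ2def]; linarith
      have hΛγ2 : Λ < γ2 := by rw [hγ2def]; linarith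
      have hΛγ1 : Λ < γ1 := by rw [hγ1def]; linarith
      have hγ12 : γ1 < γ2 := by rw [hγ1def]; linarith
      have hγ1pos : 0 < γ1 := lt_trans hΛpos hΛγ1
      have hγ2pos : 0 < γ2 := lt_trans hγ1pos hγ12
      set a' : ℝ := γ2 / γ1 with ha'def
      have ha' : 1 < a' := (one_lt_div hγ1pos).2 hγ12
      have heq : γ2 = a' * γ1 := by rw [ha'def]; field_simp
      have hm1 : pModular Ω p (fun x => g x / γ1) ≤ 1 := hSp_up γ1 hΛγ1
      have hm2 : pModular Ω p (fun x => g x / γ2) < 1 := by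
        calc pModular Ω p (fun x => g x / γ2)
            = pModular Ω p (fun x => g x / (a' * γ1)) := by rw [← heq]
          _ ≤ ENNReal.ofReal (1 / a') * pModular Ω p (fun x => g x / γ1) :=
              pModular_div_scale hΩmeas hp1 hg0 hγ1pos ha'
          _ ≤ ENNReal.ofReal (1 / a') * 1 := by gcongr
          _ = ENNReal.ofReal (1 / a') := mul_one _
          _ < 1 := by
              rw [← ENNReal.ofReal_one]
              exact (ENNReal.ofReal_lt_ofReal_iff one_pos).2
                ((div_lt_one (lt_trans one_pos ha')).2 ha')
      filter_upwards [(hmodconv γ2 hγ2pos).eventually_lt_const hm2] with h hh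
      have : luxNorm Ω (ph h) g ≤ γ2 := csInf_le (hbdd _) ⟨hγ2pos, hh.le⟩
      linarith
end

section
/- Modular convergence along a subsequence under strong L^{p_S}-convergence (the analytic content of Lemma 2.9): Let Ω have finite Lebesgue measure, let p, p_h : Ω → ℝ (h ∈ ℕ) be measurable with p_h(x) → p(x) for a.e. x ∈ Ω, and suppose there are constants 1 < p_I and p_S < ∞ such that p_I ≤ p_h(x) ≤ p_S for all h and a.e. x. If u_h → u strongly in the constant-exponent Lebesgue space L^{p_S}(Ω), then there exists a subsequence (u_{h_n}) such that lim_{n→∞} ρ_{p_{h_n}(x)}(u_{h_n}) = ρ_{p(x)}(u). -/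
open MeasureTheory Filter Topology

/-- Modular convergence along a subsequence under strong `L^{p_S}`-convergence:
if `p_h → p` a.e. with `1 < p_I ≤ p_h ≤ p_S < ∞` and `u_h → u` strongly in the
constant-exponent space `L^{p_S}(Ω)`, then `ρ_{p_{h_n}(x)}(u_{h_n}) → ρ_{p(x)}(u)`
along a subsequence. -/
theorem modular_convergence_subsequence {N : ℕ} (hN : 2 ≤ N)
    (Ω : Set (EuclideanSpace ℝ (Fin N))) (hΩmeas : MeasurableSet Ω)
    (hΩfin : volume Ω < ⊤)
    (p : EuclideanSpace ℝ (Fin N) → ℝ)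
    (ph : ℕ → EuclideanSpace ℝ (Fin N) → ℝ)
    (hpmeas : Measurable p) (hphmeas : ∀ h, Measurable (ph h))
    (hpconv : ∀ᵐ x ∂(volume.restrict Ω), Tendsto (fun h => ph h x) atTop (𝓝 (p x)))
    (pI pS : ℝ) (hpI : 1 < pI)
    (hbounds : ∀ h, ∀ᵐ x ∂(volume.restrict Ω), pI ≤ ph h x ∧ ph h x ≤ pS)
    (u : EuclideanSpace ℝ (Fin N) → ℝ)
    (uh : ℕ → EuclideanSpace ℝ (Fin N) → ℝ)
    (humeas : Measurable u) (huhmeas : ∀ h, Measurable (uh h))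
    (humem : MemLp u (ENNReal.ofReal pS) (volume.restrict Ω))
    (huhmem : ∀ h, MemLp (uh h) (ENNReal.ofReal pS) (volume.restrict Ω))
    (hstrong : Tendsto
      (fun h => eLpNorm (fun x => uh h x - u x) (ENNReal.ofReal pS) (volume.restrict Ω))
      atTop (𝓝 0)) :
    ∃ φ : ℕ → ℕ, StrictMono φ ∧
      Tendsto (fun n => pModular Ω (ph (φ n)) (uh (φ n))) atTop
        (𝓝 (pModular Ω p u)) := by
  classical
  set μ := volume.restrict Ω with hμdef
  by_cases hμ0 : μ = 0
  · refine ⟨id, strictMono_id, ?_⟩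
    have hz : ∀ q v, pModular Ω q v = 0 := by
      intro q v
      simp only [pModular, ← hμdef, hμ0, lintegral_zero_measure]
    simp only [hz]
    exact tendsto_const_nhds
  -- main case
  have hae : (ae μ).NeBot := ae_neBot.mpr hμ0
  obtain ⟨x₀, hx₀⟩ := (hbounds 0).exists
  have hpS1 : 1 < pS := lt_of_lt_of_le hpI (le_trans hx₀.1 hx₀.2)
  have hpS0 : 0 < pS := lt_trans one_pos hpS1
  set q : ENNReal := ENNReal.ofReal pS with hqdef
  have hq0 : q ≠ 0 := by
    rw [hqdef]
    exact (ENNReal.ofReal_pos.mpr hpS0).ne'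
  have hqT : q ≠ ⊤ := ENNReal.ofReal_ne_top
  have hq1 : 1 ≤ q := by
    rw [hqdef, ← ENNReal.ofReal_one]
    exact ENNReal.ofReal_le_ofReal hpS1.le
  have hqR : q.toReal = pS := ENNReal.toReal_ofReal hpS0.le
  -- Step A: a.e. convergent subsequence
  have hmeasconv : TendstoInMeasure μ uh atTop u := by
    refine tendstoInMeasure_of_tendsto_eLpNorm hq0
      (fun n => (huhmeas n).aestronglyMeasurable) humeas.aestronglyMeasurable ?_
    exact hstrong
  obtain ⟨φ₁, hφ₁mono, hφ₁ae⟩ := hmeasconv.exists_seq_tendsto_ae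
  -- Step B: further subsequence with summable eLpNorm bounds
  have h2 : Tendsto (fun n => eLpNorm (fun x => uh (φ₁ n) x - u x) q μ) atTop (𝓝 0) :=
    hstrong.comp hφ₁mono.tendsto_atTop
  have hsel : ∀ n : ℕ, ∀ᶠ k in atTop,
      eLpNorm (fun x => uh (φ₁ k) x - u x) q μ < (2⁻¹ : ENNReal) ^ n := by
    intro n
    exact h2.eventually (gt_mem_nhds (ENNReal.pow_pos (by norm_num) n))
  obtain ⟨φ₂, hφ₂mono, hφ₂⟩ := extraction_forall_of_eventually hsel
  set ψ : ℕ → ℕ := φ₁ ∘ φ₂ with hψdef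
  have hψmono : StrictMono ψ := hφ₁mono.comp hφ₂mono
  refine ⟨ψ, hψmono, ?_⟩
  -- dominating function
  set G : EuclideanSpace ℝ (Fin N) → ENNReal :=
    fun x => ENNReal.ofReal |u x| + ∑' k, ENNReal.ofReal |uh (ψ k) x - u x| with hGdef
  have hGmeas : Measurable G := by
    refine Measurable.add (f := fun x => ENNReal.ofReal |u x|)
      (g := fun x => ∑' k, ENNReal.ofReal |uh (ψ k) x - u x|) ?_ ?_
    · exact humeas.abs.ennreal_ofReal
    · exact Measurable.ennreal_tsum
        (fun k => ((huhmeas (ψ k)).sub humeas).abs.ennreal_ofReal)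
  -- partial sums
  set g : ℕ → EuclideanSpace ℝ (Fin N) → ℝ :=
    fun K x => |u x| + ∑ k ∈ Finset.range K, |uh (ψ k) x - u x| with hgdef
  have hgmeas : ∀ K, Measurable (g K) := by
    intro K
    exact humeas.abs.add (Finset.measurable_sum _
      (fun k _ => ((huhmeas (ψ k)).sub humeas).abs))
  have hgnonneg : ∀ K x, 0 ≤ g K x := by
    intro K x
    exact add_nonneg (abs_nonneg _) (Finset.sum_nonneg fun k _ => abs_nonneg _)
  have hgof : ∀ K x, ENNReal.ofReal (g K x)
      = ENNReal.ofReal |u x| + ∑ k ∈ Finset.range K, ENNReal.ofReal |uh (ψ k) x - u x| := by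
    intro K x
    rw [hgdef]
    rw [ENNReal.ofReal_add (abs_nonneg _) (Finset.sum_nonneg fun k _ => abs_nonneg _),
      ENNReal.ofReal_sum_of_nonneg (fun k _ => abs_nonneg _)]
  have hGsup : ∀ x, G x = ⨆ K, ENNReal.ofReal (g K x) := by
    intro x
    rw [hGdef]
    simp only [hgof]
    rw [ENNReal.tsum_eq_iSup_nat, ENNReal.add_iSup]
  have hgmono : ∀ x, Monotone (fun K => ENNReal.ofReal (g K x)) := by
    intro x K L hKL
    apply ENNReal.ofReal_le_ofReal
    exact add_le_add_right (Finset.sum_le_sum_of_subset_of_nonneg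
      (Finset.range_subset_range.mpr hKL) (fun k _ _ => abs_nonneg _)) _
  -- eLpNorm bound on partial sums
  set C : ENNReal := eLpNorm u q μ + 2 with hCdef
  have hCfin : C < ⊤ := by
    rw [hCdef]
    exact ENNReal.add_lt_top.mpr ⟨humem.2, by norm_num⟩
  have hgbound : ∀ K, eLpNorm (g K) q μ ≤ C := by
    intro K
    have h1 : eLpNorm (g K) q μ ≤ eLpNorm (fun x => |u x|) q μ
        + ∑ k ∈ Finset.range K, eLpNorm (fun x => |uh (ψ k) x - u x|) q μ := by
      have := eLpNorm_add_le (μ := μ) (p := q)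
        (f := fun x => |u x|)
        (g := fun x => ∑ k ∈ Finset.range K, |uh (ψ k) x - u x|)
        humeas.abs.aestronglyMeasurable
        ((Finset.measurable_sum _
          (fun k _ => ((huhmeas (ψ k)).sub humeas).abs)).aestronglyMeasurable) hq1
      refine le_trans this (add_le_add_right ?_ _)
      have hs := eLpNorm_sum_le (μ := μ) (p := q)
        (f := fun k x => |uh (ψ k) x - u x|) (s := Finset.range K)
        (fun k _ => ((huhmeas (ψ k)).sub humeas).abs.aestronglyMeasurable) hq1
      refine le_trans (le_of_eq ?_) hs
      congr 1
      ext x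
      simp
    have h2u : eLpNorm (fun x => |u x|) q μ = eLpNorm u q μ := by
      simpa using eLpNorm_norm (μ := μ) (p := q) u
    have h2d : ∀ k, eLpNorm (fun x => |uh (ψ k) x - u x|) q μ
        = eLpNorm (fun x => uh (ψ k) x - u x) q μ := by
      intro k
      simpa using eLpNorm_norm (μ := μ) (p := q) (fun x => uh (ψ k) x - u x)
    calc eLpNorm (g K) q μ
        ≤ eLpNorm u q μ + ∑ k ∈ Finset.range K, eLpNorm (fun x => uh (ψ k) x - u x) q μ := by
          rw [h2u] at h1
          simp only [h2d] at h1
          exact h1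
      _ ≤ eLpNorm u q μ + ∑ k ∈ Finset.range K, (2⁻¹ : ENNReal) ^ k := by
          refine add_le_add_right (Finset.sum_le_sum fun k _ => ?_) _
          exact (hφ₂ k).le
      _ ≤ eLpNorm u q μ + 2 := by
          refine add_le_add_right ?_ _
          refine le_trans (ENNReal.sum_le_tsum _) ?_
          rw [ENNReal.tsum_geometric]
          norm_num
  -- lintegral of G ^ pS
  have hofreal_rpow : ∀ K, ∫⁻ x, ENNReal.ofReal (g K x) ^ pS ∂μ = (eLpNorm (g K) q μ) ^ pS := by
    intro K
    rw [eLpNorm_eq_lintegral_rpow_enorm_toReal hq0 hqT, hqR, ← ENNReal.rpow_mul, one_div,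
      inv_mul_cancel₀ hpS0.ne', ENNReal.rpow_one]
    congr 1
    ext x
    congr 1
    rw [← ofReal_norm, Real.norm_eq_abs, abs_of_nonneg (hgnonneg K x)]
  have hpowsup : ∀ x, G x ^ pS = ⨆ K, ENNReal.ofReal (g K x) ^ pS := by
    intro x
    rw [hGsup x]
    exact Monotone.map_iSup_of_continuousAt ENNReal.continuous_rpow_const.continuousAt
      (ENNReal.monotone_rpow_of_nonneg hpS0.le) (by simp [ENNReal.zero_rpow_of_pos hpS0])
  have hGint : ∫⁻ x, G x ^ pS ∂μ ≤ C ^ pS := by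
    calc ∫⁻ x, G x ^ pS ∂μ = ∫⁻ x, ⨆ K, ENNReal.ofReal (g K x) ^ pS ∂μ := by
          simp only [hpowsup]
      _ = ⨆ K, ∫⁻ x, ENNReal.ofReal (g K x) ^ pS ∂μ := by
          refine lintegral_iSup (fun K => ((hgmeas K).ennreal_ofReal.pow measurable_const)) ?_
          intro K L hKL x
          exact ENNReal.rpow_le_rpow (hgmono x hKL) hpS0.le
      _ = ⨆ K, (eLpNorm (g K) q μ) ^ pS := by simp only [hofreal_rpow]
      _ ≤ C ^ pS := by
          refine iSup_le fun K => ENNReal.rpow_le_rpow (hgbound K) hpS0.le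
  set F : EuclideanSpace ℝ (Fin N) → ENNReal := fun x => 1 + G x ^ pS with hFdef
  have hFint : ∫⁻ x, F x ∂μ ≠ ⊤ := by
    rw [hFdef]
    simp only []
    rw [lintegral_add_left measurable_const]
    refine ENNReal.add_ne_top.mpr ⟨?_, ?_⟩
    · rw [lintegral_const, one_mul]
      rw [hμdef, Measure.restrict_apply_univ]
      exact hΩfin.ne
    · exact (lt_of_le_of_lt hGint
        (ENNReal.rpow_lt_top_of_nonneg hpS0.le hCfin.ne)).ne
  -- a.e. facts
  have hψae : ∀ᵐ x ∂μ, Tendsto (fun n => uh (ψ n) x) atTop (𝓝 (u x)) :=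
    hφ₁ae.mono fun x hx => hx.comp hφ₂mono.tendsto_atTop
  have hpψ : ∀ᵐ x ∂μ, Tendsto (fun n => ph (ψ n) x) atTop (𝓝 (p x)) :=
    hpconv.mono fun x hx => hx.comp hψmono.tendsto_atTop
  have hball : ∀ᵐ x ∂μ, ∀ n, pI ≤ ph (ψ n) x ∧ ph (ψ n) x ≤ pS :=
    ae_all_iff.mpr fun n => hbounds (ψ n)
  -- dominated convergence
  show Tendsto (fun n => ∫⁻ x, ENNReal.ofReal (|uh (ψ n) x| ^ ph (ψ n) x) ∂μ) atTop
    (𝓝 (∫⁻ x, ENNReal.ofReal (|u x| ^ p x) ∂μ))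
  refine tendsto_lintegral_of_dominated_convergence F
    (fun n => ((huhmeas (ψ n)).abs.pow (hphmeas (ψ n))).ennreal_ofReal) ?_ hFint ?_
  · intro n
    filter_upwards [hbounds (ψ n)] with x hx
    rcases le_or_gt (|uh (ψ n) x|) 1 with h1 | h1
    · have hle : |uh (ψ n) x| ^ ph (ψ n) x ≤ 1 :=
        Real.rpow_le_one (abs_nonneg _) h1 (by linarith [hx.1])
      calc ENNReal.ofReal (|uh (ψ n) x| ^ ph (ψ n) x) ≤ 1 := ENNReal.ofReal_le_one.mpr hle
        _ ≤ F x := le_self_add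
    · have h2 : |uh (ψ n) x| ^ ph (ψ n) x ≤ |uh (ψ n) x| ^ pS :=
        Real.rpow_le_rpow_of_exponent_le h1.le hx.2
      have h4 : ENNReal.ofReal |uh (ψ n) x| ≤ G x := by
        calc ENNReal.ofReal |uh (ψ n) x|
            ≤ ENNReal.ofReal (|u x| + |uh (ψ n) x - u x|) := by
              refine ENNReal.ofReal_le_ofReal ?_
              have := abs_sub_abs_le_abs_sub (uh (ψ n) x) (u x)
              linarith
          _ = ENNReal.ofReal |u x| + ENNReal.ofReal |uh (ψ n) x - u x| :=
              ENNReal.ofReal_add (abs_nonneg _) (abs_nonneg _)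
          _ ≤ G x := add_le_add_right (ENNReal.le_tsum n) _
      calc ENNReal.ofReal (|uh (ψ n) x| ^ ph (ψ n) x)
          ≤ ENNReal.ofReal (|uh (ψ n) x| ^ pS) := ENNReal.ofReal_le_ofReal h2
        _ = ENNReal.ofReal |uh (ψ n) x| ^ pS :=
            (ENNReal.ofReal_rpow_of_nonneg (abs_nonneg _) hpS0.le).symm
        _ ≤ G x ^ pS := ENNReal.rpow_le_rpow h4 hpS0.le
        _ ≤ F x := le_add_self
  · filter_upwards [hψae, hpψ, hball] with x hxu hxp hxb
    have hpIpx : pI ≤ p x := ge_of_tendsto hxp (Eventually.of_forall fun n => (hxb n).1)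
    have hppos : 0 < p x := by linarith
    have habs : Tendsto (fun n => |uh (ψ n) x|) atTop (𝓝 |u x|) :=
      (continuous_abs.tendsto _).comp hxu
    have h5 : Tendsto (fun n => |uh (ψ n) x| ^ ph (ψ n) x) atTop (𝓝 (|u x| ^ p x)) :=
      habs.rpow hxp (Or.inr hppos)
    exact (ENNReal.continuous_ofReal.tendsto _).comp h5
end

section
/- Convergence of Luxemburg norms along a subsequence under strong L^{p_S}-convergence (norm-convergence fragment of Theorem 2.11): Let p and p_h (h ∈ ℕ) all belong to the class 𝒞 with p_h(x) → p(x) for every x ∈ Ω, and suppose there are constants 1 < p_I and p_S < ∞ such that p_I ≤ p_h(x) ≤ p_S for all h and all x ∈ Ω. If u_h → u strongly in the constant-exponent Lebesgue space L^{p_S}(Ω), then there exists a subsequence (u_{h_n}) such that lim_{n→∞} ‖u_{h_n}‖_{p_{h_n}(x)} = ‖u‖_{p(x)}. -/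
open MeasureTheory Filter Topology

private lemma lp_finsum_le {α : Type*} [MeasurableSpace α] (μ : Measure α) {q : ℝ} (hq : 1 ≤ q)
    {f : ℕ → α → ENNReal} (hf : ∀ n, AEMeasurable (f n) μ) (k : ℕ) :
    (∫⁻ x, (∑ n ∈ Finset.range k, f n x) ^ q ∂μ) ^ (1/q) ≤
      ∑ n ∈ Finset.range k, (∫⁻ x, f n x ^ q ∂μ) ^ (1/q) := by
  induction k with
  | zero =>
      simp [ENNReal.zero_rpow_of_pos (lt_of_lt_of_le zero_lt_one hq),
        ENNReal.zero_rpow_of_pos (by positivity : (0:ℝ) < 1/q), lt_of_lt_of_le zero_lt_one hq]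
  | succ k ih =>
      simp only [Finset.sum_range_succ]
      calc (∫⁻ x, ((∑ n ∈ Finset.range k, f n x) + f k x) ^ q ∂μ) ^ (1/q)
          ≤ (∫⁻ x, (∑ n ∈ Finset.range k, f n x) ^ q ∂μ) ^ (1/q)
            + (∫⁻ x, f k x ^ q ∂μ) ^ (1/q) :=
            ENNReal.lintegral_Lp_add_le (Finset.aemeasurable_fun_sum _ (fun n _ => hf n)) (hf k) hq
        _ ≤ _ := add_le_add_left ih _

private lemma pModular_mono {N : ℕ} {Ω : Set (EuclideanSpace ℝ (Fin N))}
    (hΩ : MeasurableSet Ω) {q : EuclideanSpace ℝ (Fin N) → ℝ}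
    (hq : ∀ x ∈ Ω, 0 ≤ q x) (w : EuclideanSpace ℝ (Fin N) → ℝ)
    {γ γ' : ℝ} (h0 : 0 < γ) (h : γ ≤ γ') :
    pModular Ω q (fun x => w x / γ') ≤ pModular Ω q (fun x => w x / γ) := by
  refine lintegral_mono_ae ?_
  filter_upwards [ae_restrict_mem hΩ] with x hx
  refine ENNReal.ofReal_le_ofReal (Real.rpow_le_rpow (abs_nonneg _) ?_ (hq x hx))
  rw [abs_div, abs_div, abs_of_pos h0, abs_of_pos (lt_of_lt_of_le h0 h)]
  gcongr

private lemma pModular_scale {N : ℕ} {Ω : Set (EuclideanSpace ℝ (Fin N))}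
    (hΩ : MeasurableSet Ω) {q : EuclideanSpace ℝ (Fin N) → ℝ} {c : ℝ}
    (hq : ∀ x ∈ Ω, c ≤ q x) (w : EuclideanSpace ℝ (Fin N) → ℝ)
    {γ γ' : ℝ} (h0' : 0 < γ') (h : γ' < γ) :
    pModular Ω q (fun x => w x / γ) ≤
      ENNReal.ofReal ((γ'/γ) ^ c) * pModular Ω q (fun x => w x / γ') := by
  have h0 : 0 < γ := h0'.trans h
  have hr0 : 0 < γ' / γ := div_pos h0' h0
  have hr1 : γ' / γ ≤ 1 := le_of_lt ((div_lt_one h0).2 h)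
  rw [pModular, pModular, ← lintegral_const_mul' _ _ ENNReal.ofReal_ne_top]
  refine lintegral_mono_ae ?_
  filter_upwards [ae_restrict_mem hΩ] with x hx
  rw [← ENNReal.ofReal_mul (Real.rpow_nonneg hr0.le _)]
  refine ENNReal.ofReal_le_ofReal ?_
  have h1 : |w x / γ| = (γ' / γ) * |w x / γ'| := by
    rw [abs_div, abs_div, abs_of_pos h0, abs_of_pos h0']
    field_simp
  rw [h1, Real.mul_rpow hr0.le (abs_nonneg _)]
  exact mul_le_mul_of_nonneg_right
    (Real.rpow_le_rpow_of_exponent_ge hr0 hr1 (hq x hx))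
    (Real.rpow_nonneg (abs_nonneg _) _)

/-- Convergence of Luxemburg norms along a subsequence under strong
`L^{p_S}`-convergence: if `p, p_h ∈ 𝒞`, `p_h → p` pointwise on `Ω` with
`1 < p_I ≤ p_h ≤ p_S < ∞` on `Ω`, and `u_h → u` strongly in the
constant-exponent space `L^{p_S}(Ω)`, then `‖u_{h_n}‖_{p_{h_n}(x)} → ‖u‖_{p(x)}`
along a subsequence. -/
theorem luxNorm_convergence_subsequence {N : ℕ} (hN : 2 ≤ N)
    (Ω : Set (EuclideanSpace ℝ (Fin N))) (hΩopen : IsOpen Ω)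
    (hΩbdd : Bornology.IsBounded Ω)
    (p : EuclideanSpace ℝ (Fin N) → ℝ)
    (ph : ℕ → EuclideanSpace ℝ (Fin N) → ℝ)
    (hp : InClassC Ω p) (hph : ∀ h, InClassC Ω (ph h))
    (hpconv : ∀ x ∈ Ω, Tendsto (fun h => ph h x) atTop (𝓝 (p x)))
    (pI pS : ℝ) (hpI : 1 < pI)
    (hbounds : ∀ h, ∀ x ∈ Ω, pI ≤ ph h x ∧ ph h x ≤ pS)
    (u : EuclideanSpace ℝ (Fin N) → ℝ)
    (uh : ℕ → EuclideanSpace ℝ (Fin N) → ℝ)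
    (humeas : Measurable u) (huhmeas : ∀ h, Measurable (uh h))
    (humem : MemLp u (ENNReal.ofReal pS) (volume.restrict Ω))
    (huhmem : ∀ h, MemLp (uh h) (ENNReal.ofReal pS) (volume.restrict Ω))
    (hstrong : Tendsto
      (fun h => eLpNorm (fun x => uh h x - u x) (ENNReal.ofReal pS) (volume.restrict Ω))
      atTop (𝓝 0)) :
    ∃ φ : ℕ → ℕ, StrictMono φ ∧
      Tendsto (fun n => luxNorm Ω (ph (φ n)) (uh (φ n))) atTop
        (𝓝 (luxNorm Ω p u)) := by
  classical
  have hΩmeas : MeasurableSet Ω := hΩopen.measurableSet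
  rcases Set.eq_empty_or_nonempty Ω with hΩe | ⟨x₀, hx₀⟩
  · subst hΩe
    refine ⟨id, strictMono_id, ?_⟩
    have hlux : ∀ q w : EuclideanSpace ℝ (Fin N) → ℝ, luxNorm ∅ q w = 0 := by
      intro q w
      have hset : {γ : ℝ | 0 < γ ∧ pModular ∅ q (fun x => w x / γ) ≤ 1} = Set.Ioi 0 := by
        ext γ
        simp [pModular]
      rw [luxNorm, hset]
      exact csInf_Ioi
    simp only [hlux, id]
    exact tendsto_const_nhds
  -- basic constants
  have hpS : 1 < pS := lt_of_lt_of_le hpI ((hbounds 0 x₀ hx₀).1.trans (hbounds 0 x₀ hx₀).2)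
  have hpS0 : (0:ℝ) < pS := by linarith
  have hpI0 : (0:ℝ) < pI := by linarith
  set P : ENNReal := ENNReal.ofReal pS with hP
  have hP0 : P ≠ 0 := (ENNReal.ofReal_pos.2 hpS0).ne'
  have hPtop : P ≠ ⊤ := ENNReal.ofReal_ne_top
  have hPto : P.toReal = pS := ENNReal.toReal_ofReal hpS0.le
  have hμfin : volume Ω < ⊤ := hΩbdd.measure_lt_top
  have hpb : ∀ x ∈ Ω, pI ≤ p x ∧ p x ≤ pS := fun x hx =>
    ⟨ge_of_tendsto (hpconv x hx) (Eventually.of_forall fun h => (hbounds h x hx).1),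
     le_of_tendsto (hpconv x hx) (Eventually.of_forall fun h => (hbounds h x hx).2)⟩
  have hexpmeas : ∀ q : EuclideanSpace ℝ (Fin N) → ℝ, InClassC Ω q →
      AEMeasurable q (volume.restrict Ω) := fun q hq =>
    (hq.1.mono subset_closure).aemeasurable hΩmeas
  -- Step 1 : extraction of a good subsequence
  have hTIM : TendstoInMeasure (volume.restrict Ω) uh atTop u :=
    tendstoInMeasure_of_tendsto_eLpNorm hP0 (fun n => (huhmeas n).aestronglyMeasurable)
      humeas.aestronglyMeasurable (by simpa [Pi.sub_def] using hstrong)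
  obtain ⟨ns, hns, hns_ae⟩ := hTIM.exists_seq_tendsto_ae
  have hstrong' : Tendsto (fun k => eLpNorm (fun x => uh (ns k) x - u x) P (volume.restrict Ω))
      atTop (𝓝 0) := hstrong.comp hns.tendsto_atTop
  obtain ⟨ψ, hψ, hψle⟩ : ∃ ψ : ℕ → ℕ, StrictMono ψ ∧ ∀ n,
      eLpNorm (fun x => uh (ns (ψ n)) x - u x) P (volume.restrict Ω) ≤ 2⁻¹ ^ n := by
    apply Filter.extraction_forall_of_eventually
      (P := fun n k => eLpNorm (fun x => uh (ns k) x - u x) P (volume.restrict Ω) ≤ 2⁻¹ ^ n)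
    intro n
    have h2 : (0:ENNReal) < 2⁻¹ ^ n :=
      ENNReal.pow_pos (ENNReal.inv_pos.2 (by norm_num)) n
    exact (hstrong'.eventually_lt_const h2).mono fun k hk => hk.le
  set φ : ℕ → ℕ := ns ∘ ψ with hφ
  have hφmono : StrictMono φ := hns.comp hψ
  set v : ℕ → EuclideanSpace ℝ (Fin N) → ℝ := fun n => uh (φ n) with hv
  have hvmeas : ∀ n, Measurable (v n) := fun n => huhmeas (φ n)
  have hv_ae : ∀ᵐ x ∂(volume.restrict Ω), Tendsto (fun n => v n x) atTop (𝓝 (u x)) :=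
    hns_ae.mono fun x hx => hx.comp hψ.tendsto_atTop
  have hvnorm : ∀ n, eLpNorm (fun x => v n x - u x) P (volume.restrict Ω) ≤ 2⁻¹ ^ n := hψle
  -- Step 2 : dominating function
  set g : EuclideanSpace ℝ (Fin N) → ENNReal :=
    fun x => (‖u x‖₊ : ENNReal) + ∑' n, (‖v n x - u x‖₊ : ENNReal) with hg
  have hgm : Measurable g :=
    humeas.nnnorm.coe_nnreal_ennreal.add (Measurable.ennreal_tsum (fun n => ((hvmeas n).sub humeas).nnnorm.coe_nnreal_ennreal))
  have hgbound : ∀ n x, (‖v n x‖₊ : ENNReal) ≤ g x := by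
    intro n x
    calc (‖v n x‖₊ : ENNReal) ≤ ‖u x‖₊ + ‖v n x - u x‖₊ := by
          rw [← ENNReal.coe_add]
          exact_mod_cast nnnorm_le_insert' (v n x) (u x)
      _ ≤ g x := add_le_add_right (ENNReal.le_tsum n) _
  -- partial sums
  set G : ℕ → EuclideanSpace ℝ (Fin N) → ENNReal :=
    fun k x => (‖u x‖₊ : ENNReal) + ∑ n ∈ Finset.range k, (‖v n x - u x‖₊ : ENNReal) with hGdef
  have hGmeas : ∀ k, Measurable (G k) := fun k =>
    humeas.nnnorm.coe_nnreal_ennreal.add (Finset.measurable_sum _ (fun n _ => ((hvmeas n).sub humeas).nnnorm.coe_nnreal_ennreal))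
  have hGmono : ∀ x, Monotone fun k => G k x := by
    intro x a b hab
    exact add_le_add_right (Finset.sum_le_sum_of_subset (Finset.range_subset_range.2 hab)) _
  have hGtendsto : ∀ x, Tendsto (fun k => G k x) atTop (𝓝 (g x)) := by
    intro x
    have : g x = ⨆ k, G k x := by
      rw [hg]
      simp only [ENNReal.tsum_eq_iSup_nat]
      rw [ENNReal.add_iSup]
    rw [this]
    exact tendsto_atTop_iSup (hGmono x)
  -- eLpNorm expressions
  have heL : ∀ f : EuclideanSpace ℝ (Fin N) → ℝ,
      eLpNorm f P (volume.restrict Ω)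
        = (∫⁻ x in Ω, (‖f x‖₊ : ENNReal) ^ pS) ^ (1/pS) := by
    intro f
    rw [eLpNorm_eq_lintegral_rpow_enorm_toReal hP0 hPtop, hPto]
    simp only [enorm_eq_nnnorm]
  set A : ENNReal := eLpNorm u P (volume.restrict Ω) with hA
  have hAtop : A ≠ ⊤ := humem.2.ne
  have hsum2 : ∀ k, ∑ n ∈ Finset.range k, ((2:ENNReal)⁻¹) ^ n ≤ 2 := by
    intro k
    calc ∑ n ∈ Finset.range k, ((2:ENNReal)⁻¹) ^ n ≤ ∑' n, ((2:ENNReal)⁻¹) ^ n :=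
          ENNReal.sum_le_tsum _
      _ = 2 := by
          rw [ENNReal.tsum_geometric]
          norm_num
  have hGle : ∀ k, (∫⁻ x in Ω, (G k x) ^ pS) ≤ (A + 2) ^ pS := by
    intro k
    have h1 : (∫⁻ x in Ω, (G k x) ^ pS) ^ (1/pS) ≤ A + 2 := by
      calc (∫⁻ x in Ω, (G k x) ^ pS) ^ (1/pS)
          ≤ (∫⁻ x in Ω, ((‖u x‖₊ : ENNReal)) ^ pS) ^ (1/pS)
            + (∫⁻ x in Ω, (∑ n ∈ Finset.range k, (‖v n x - u x‖₊ : ENNReal)) ^ pS) ^ (1/pS) :=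
            ENNReal.lintegral_Lp_add_le humeas.nnnorm.coe_nnreal_ennreal.aemeasurable
              (Finset.aemeasurable_fun_sum _ fun n _ => ((hvmeas n).sub humeas).nnnorm.coe_nnreal_ennreal.aemeasurable)
              hpS.le
        _ ≤ A + ∑ n ∈ Finset.range k,
              (∫⁻ x in Ω, ((‖v n x - u x‖₊ : ENNReal)) ^ pS) ^ (1/pS) := by
            refine add_le_add ?_ ?_
            · rw [hA, heL u]
            · exact lp_finsum_le _ hpS.le
                (fun n => ((hvmeas n).sub humeas).nnnorm.coe_nnreal_ennreal.aemeasurable) k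
        _ ≤ A + ∑ n ∈ Finset.range k, ((2:ENNReal)⁻¹) ^ n := by
            refine add_le_add_right (Finset.sum_le_sum fun n _ => ?_) _
            rw [← heL]
            exact hvnorm n
        _ ≤ A + 2 := add_le_add_right (hsum2 k) _
    calc (∫⁻ x in Ω, (G k x) ^ pS)
        = ((∫⁻ x in Ω, (G k x) ^ pS) ^ (1/pS)) ^ pS := by
          rw [← ENNReal.rpow_mul, one_div, inv_mul_cancel₀ hpS0.ne', ENNReal.rpow_one]
      _ ≤ (A + 2) ^ pS := ENNReal.rpow_le_rpow h1 hpS0.le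
  have hgint : (∫⁻ x in Ω, g x ^ pS) < ⊤ := by
    have hT : Tendsto (fun k => ∫⁻ x in Ω, (G k x) ^ pS) atTop (𝓝 (∫⁻ x in Ω, g x ^ pS)) := by
      refine lintegral_tendsto_of_tendsto_of_monotone
        (fun k => ((hGmeas k).pow_const pS).aemeasurable) ?_ ?_
      · exact Eventually.of_forall fun x a b hab => ENNReal.rpow_le_rpow (hGmono x hab) hpS0.le
      · exact Eventually.of_forall fun x =>
          (ENNReal.continuous_rpow_const.tendsto _).comp (hGtendsto x)
    have hle := le_of_tendsto hT (Eventually.of_forall hGle)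
    exact lt_of_le_of_lt hle (ENNReal.rpow_lt_top_of_nonneg hpS0.le
      (by finiteness))

  have hpIS : pI ≤ pS := (hbounds 0 x₀ hx₀).1.trans (hbounds 0 x₀ hx₀).2
  have hUint : (∫⁻ x in Ω, (‖u x‖₊ : ENNReal) ^ pS) < ⊤ := by
    have h2 := humem.2
    rw [heL u] at h2
    by_contra hcon
    rw [not_lt, top_le_iff] at hcon
    rw [hcon, ENNReal.top_rpow_of_pos (by positivity)] at h2
    exact lt_irrefl _ h2
  -- Step 3 : modular convergence for each fixed positive γ
  have hmod : ∀ γ : ℝ, 0 < γ →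
      Tendsto (fun n => pModular Ω (ph (φ n)) (fun x => v n x / γ)) atTop
        (𝓝 (pModular Ω p (fun x => u x / γ))) := by
    intro γ hγ
    set c : ENNReal := ENNReal.ofReal γ with hcdef
    have hc0 : c ≠ 0 := (ENNReal.ofReal_pos.2 hγ).ne'
    simp only [pModular]
    refine tendsto_lintegral_of_dominated_convergence'
      (fun x => (g x / c) ^ pI + (g x / c) ^ pS) ?_ ?_ ?_ ?_
    · intro n
      exact ENNReal.measurable_ofReal.comp_aemeasurable
        ((((hvmeas n).div_const γ).abs.aemeasurable).pow (hexpmeas _ (hph (φ n))))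
    · intro n
      filter_upwards [ae_restrict_mem hΩmeas] with x hx
      have hq := hbounds (φ n) x hx
      have habs : |v n x / γ| = |v n x| / γ := by rw [abs_div, abs_of_pos hγ]
      rw [habs, ← ENNReal.ofReal_rpow_of_nonneg (div_nonneg (abs_nonneg _) hγ.le)
        (le_trans hpI0.le hq.1)]
      have ht : ENNReal.ofReal (|v n x| / γ) ≤ g x / c := by
        rw [ENNReal.ofReal_div_of_pos hγ]
        gcongr
        calc ENNReal.ofReal |v n x| = (‖v n x‖₊ : ENNReal) := by
              rw [← Real.norm_eq_abs, ofReal_norm, enorm_eq_nnnorm]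
          _ ≤ g x := hgbound n x
      calc (ENNReal.ofReal (|v n x| / γ)) ^ ph (φ n) x
          ≤ (g x / c) ^ ph (φ n) x := ENNReal.rpow_le_rpow ht (le_trans hpI0.le hq.1)
        _ ≤ (g x / c) ^ pI + (g x / c) ^ pS := by
            rcases le_total (g x / c) 1 with hs | hs
            · exact le_trans (ENNReal.rpow_le_rpow_of_exponent_ge hs hq.1) le_self_add
            · exact le_trans (ENNReal.rpow_le_rpow_of_exponent_le hs hq.2) le_add_self
    · -- finiteness of the dominating function
      have hS : (∫⁻ x in Ω, (g x / c) ^ pS) < ⊤ := by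
        have hrw : ∀ x : EuclideanSpace ℝ (Fin N),
            (g x / c) ^ pS = g x ^ pS * (c⁻¹) ^ pS := fun x => by
          rw [div_eq_mul_inv, ENNReal.mul_rpow_of_nonneg _ _ hpS0.le]
        simp only [hrw]
        rw [lintegral_mul_const' _ _ (ENNReal.rpow_ne_top_of_nonneg hpS0.le
          (ENNReal.inv_ne_top.2 hc0))]
        exact ENNReal.mul_lt_top hgint (ENNReal.rpow_lt_top_of_nonneg hpS0.le
          (ENNReal.inv_ne_top.2 hc0))
      have hI : (∫⁻ x in Ω, (g x / c) ^ pI) < ⊤ := by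
        have hle : ∀ x : EuclideanSpace ℝ (Fin N), (g x / c) ^ pI ≤ 1 + (g x / c) ^ pS := by
          intro x
          rcases le_total (g x / c) 1 with hs | hs
          · exact le_trans (ENNReal.rpow_le_one hs hpI0.le) le_self_add
          · exact le_trans (ENNReal.rpow_le_rpow_of_exponent_le hs hpIS) le_add_self
        calc (∫⁻ x in Ω, (g x / c) ^ pI) ≤ ∫⁻ x in Ω, (1 + (g x / c) ^ pS) := lintegral_mono hle
          _ = (volume Ω) + ∫⁻ x in Ω, (g x / c) ^ pS := by
              rw [lintegral_add_left measurable_const, setLIntegral_one]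
          _ < ⊤ := ENNReal.add_lt_top.2 ⟨hμfin, hS⟩
      rw [lintegral_add_left' (((hgm.div_const c).pow_const pI).aemeasurable) _]
      exact (ENNReal.add_lt_top.2 ⟨hI, hS⟩).ne
    · -- a.e. pointwise convergence
      filter_upwards [hv_ae, ae_restrict_mem hΩmeas] with x hx1 hx2
      have h1 : Tendsto (fun n => |v n x / γ|) atTop (𝓝 |u x / γ|) :=
        (hx1.div_const γ).abs
      have h2 : Tendsto (fun n => ph (φ n) x) atTop (𝓝 (p x)) :=
        (hpconv x hx2).comp hφmono.tendsto_atTop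
      have h3 := h1.rpow h2 (Or.inr (lt_of_lt_of_le hpI0 (hpb x hx2).1))
      exact (ENNReal.continuous_ofReal.tendsto _).comp h3
  -- Step 4 : the Luxemburg norm analysis
  set S : Set ℝ := {γ : ℝ | 0 < γ ∧ pModular Ω p (fun x => u x / γ) ≤ 1} with hSdef
  have hlam : luxNorm Ω p u = sInf S := rfl
  have hSbdd : BddBelow S := ⟨0, fun γ hγ => hγ.1.le⟩
  have hSne : S.Nonempty := by
    set C : ENNReal := ∫⁻ x in Ω, (1 + (‖u x‖₊ : ENNReal) ^ pS) with hCdef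
    have hCfin : C ≠ ⊤ := by
      rw [hCdef, lintegral_add_left measurable_const, setLIntegral_one]
      exact (ENNReal.add_lt_top.2 ⟨hμfin, hUint⟩).ne
    have hkey : ∀ γ : ℝ, 1 ≤ γ →
        pModular Ω p (fun x => u x / γ) ≤ ENNReal.ofReal (γ ^ (-pI)) * C := by
      intro γ hγ1
      have hγ0 : 0 < γ := lt_of_lt_of_le zero_lt_one hγ1
      rw [pModular, hCdef, ← lintegral_const_mul' _ _ ENNReal.ofReal_ne_top]
      refine lintegral_mono_ae ?_
      filter_upwards [ae_restrict_mem hΩmeas] with x hx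
      have hple := hpb x hx
      have h1 : |u x / γ| ^ p x ≤ γ ^ (-pI) * (1 + |u x| ^ pS) := by
        have habs : |u x / γ| = |u x| / γ := by rw [abs_div, abs_of_pos hγ0]
        rw [habs, Real.div_rpow (abs_nonneg _) hγ0.le, div_eq_mul_inv, mul_comm]
        refine mul_le_mul ?_ ?_ (Real.rpow_nonneg (abs_nonneg _) _)
          (Real.rpow_nonneg hγ0.le _)
        · rw [Real.rpow_neg hγ0.le]
          exact inv_anti₀ (Real.rpow_pos_of_pos hγ0 _)
            (Real.rpow_le_rpow_of_exponent_le hγ1 hple.1)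
        · rcases le_total |u x| 1 with hs | hs
          · exact (Real.rpow_le_one (abs_nonneg _) hs (le_trans hpI0.le hple.1)).trans
              (le_add_of_nonneg_right (Real.rpow_nonneg (abs_nonneg _) _))
          · exact (Real.rpow_le_rpow_of_exponent_le hs hple.2).trans
              (le_add_of_nonneg_left zero_le_one)
      calc ENNReal.ofReal (|u x / γ| ^ p x)
          ≤ ENNReal.ofReal (γ ^ (-pI) * (1 + |u x| ^ pS)) := ENNReal.ofReal_le_ofReal h1
        _ = ENNReal.ofReal (γ ^ (-pI)) * ENNReal.ofReal (1 + |u x| ^ pS) :=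
            ENNReal.ofReal_mul (Real.rpow_nonneg hγ0.le _)
        _ = ENNReal.ofReal (γ ^ (-pI)) * (1 + (‖u x‖₊ : ENNReal) ^ pS) := by
            rw [ENNReal.ofReal_add zero_le_one (Real.rpow_nonneg (abs_nonneg _) _),
              ENNReal.ofReal_one,
              ← ENNReal.ofReal_rpow_of_nonneg (abs_nonneg _) hpS0.le,
              ← Real.norm_eq_abs, ofReal_norm, enorm_eq_nnnorm]
    have htend : Tendsto (fun k : ℕ => ENNReal.ofReal (((k:ℝ)+1) ^ (-pI)) * C) atTop (𝓝 0) := by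
      have h1 : Tendsto (fun k : ℕ => ((k:ℝ)+1) ^ (-pI)) atTop (𝓝 0) :=
        (tendsto_rpow_neg_atTop hpI0).comp
          (tendsto_atTop_add_const_right atTop 1 tendsto_natCast_atTop_atTop)
      have h2 : Tendsto (fun k : ℕ => ENNReal.ofReal (((k:ℝ)+1) ^ (-pI))) atTop (𝓝 0) := by
        simpa [Function.comp_def] using (ENNReal.continuous_ofReal.tendsto 0).comp h1
      simpa using ENNReal.Tendsto.mul_const h2 (Or.inr hCfin)
    obtain ⟨k, hk⟩ := (htend.eventually_lt_const zero_lt_one).exists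
    refine ⟨(k:ℝ)+1, by positivity, ?_⟩
    exact le_trans (hkey _ (by linarith [Nat.cast_nonneg (α := ℝ) k])) hk.le
  have hlamnn : 0 ≤ sInf S := Real.sInf_nonneg fun γ hγ => hγ.1.le
  have hupper : ∀ γ : ℝ, sInf S < γ → pModular Ω p (fun x => u x / γ) < 1 := by
    intro γ hγ
    obtain ⟨γ', hγ'S, hγ'lt⟩ := (csInf_lt_iff hSbdd hSne).1 hγ
    calc pModular Ω p (fun x => u x / γ)
        ≤ ENNReal.ofReal ((γ'/γ) ^ pI) * pModular Ω p (fun x => u x / γ') :=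
          pModular_scale hΩmeas (fun x hx => (hpb x hx).1) u hγ'S.1 hγ'lt
      _ ≤ ENNReal.ofReal ((γ'/γ) ^ pI) * 1 := mul_le_mul_right hγ'S.2 _
      _ < 1 := by
          rw [mul_one]
          exact ENNReal.ofReal_lt_one.2 (Real.rpow_lt_one
            (le_of_lt (div_pos hγ'S.1 (hγ'S.1.trans hγ'lt)))
            ((div_lt_one (hγ'S.1.trans hγ'lt)).2 hγ'lt) hpI0)
  have hlower : ∀ γ : ℝ, 0 < γ → γ < sInf S → 1 < pModular Ω p (fun x => u x / γ) := by
    intro γ hγ0 hγ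
    by_contra hcon
    push_neg at hcon
    exact absurd (csInf_le hSbdd ⟨hγ0, hcon⟩) (not_le.2 hγ)
  -- conclusion
  refine ⟨φ, hφmono, ?_⟩
  rw [hlam, Metric.tendsto_atTop]
  intro ε hε
  have hup : ∀ᶠ n in atTop,
      pModular Ω (ph (φ n)) (fun x => v n x / (sInf S + ε/2)) < 1 :=
    (hmod (sInf S + ε/2) (by linarith)).eventually_lt_const (hupper _ (by linarith))
  have hlow : ∀ᶠ n in atTop, ∀ δ : ℝ, 0 < δ →
      pModular Ω (ph (φ n)) (fun x => v n x / δ) ≤ 1 → sInf S - ε/2 ≤ δ := by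
    rcases le_or_gt (sInf S) (ε/2) with hcase | hcase
    · exact Eventually.of_forall fun n δ hδ _ => by linarith
    · have h1 : (0:ℝ) < sInf S - ε/2 := by linarith
      have h2 : sInf S - ε/2 < sInf S := by linarith
      refine ((hmod (sInf S - ε/2) h1).eventually_const_lt (hlower _ h1 h2)).mono ?_
      intro n hn δ hδ0 hδ
      by_contra hcon
      push_neg at hcon
      have hmono := pModular_mono hΩmeas
        (fun x hx => le_trans hpI0.le (hbounds (φ n) x hx).1) (v n) hδ0 hcon.le
      exact absurd (le_trans hmono hδ) (not_le.2 hn)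
  obtain ⟨M, hM⟩ := eventually_atTop.1 (hup.and hlow)
  refine ⟨M, fun n hn => ?_⟩
  obtain ⟨h1, h2⟩ := hM n hn
  have hmem : (sInf S + ε/2) ∈
      {γ : ℝ | 0 < γ ∧ pModular Ω (ph (φ n)) (fun x => uh (φ n) x / γ) ≤ 1} :=
    ⟨by linarith, h1.le⟩
  have hbddn : BddBelow
      {γ : ℝ | 0 < γ ∧ pModular Ω (ph (φ n)) (fun x => uh (φ n) x / γ) ≤ 1} :=
    ⟨0, fun γ hγ => hγ.1.le⟩
  have hle1 : luxNorm Ω (ph (φ n)) (uh (φ n)) ≤ sInf S + ε/2 := csInf_le hbddn hmem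
  have hle2 : sInf S - ε/2 ≤ luxNorm Ω (ph (φ n)) (uh (φ n)) :=
    le_csInf ⟨_, hmem⟩ fun δ hδ => h2 δ hδ.1 hδ.2
  rw [Real.dist_eq, abs_sub_lt_iff]
  constructor <;> linarith
end
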